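/- Let r be a natural number, f = q/(1-(-1)^{r+1}q) ∈ ℚ[[q]], and δ = q·d/dq. For every m ≥ 0 there exists a polynomial P_m ∈ ℤ[X] of degree m+1 with zero constant term, linear coefficient 1, and leading coefficient (-1)^{m(r+1)}·m!, such that δ^m f = P_m(f). -/

import Mathlib

/-- The Euler derivation δ = q·d/dq on formal power series. -/
noncomputable def eulerOp (g : PowerSeries ℚ) : PowerSeries ℚ :=
  PowerSeries.mk fun d => (d : ℚ) * PowerSeries.coeff d g

/-- The basic extremal series f = Σ_{d≥1} (-1)^{(d-1)(r+1)} q^d = q/(1-(-1)^{r+1}q). -/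
noncomputable def fSer (r : ℕ) : PowerSeries ℚ :=
  PowerSeries.mk fun d => if d = 0 then 0 else ((-1 : ℚ)) ^ ((d - 1) * (r + 1))

open PowerSeries Polynomial

/-- δ as a genuine derivation: X • d/dX. -/
noncomputable def eulerDer : Derivation ℚ (PowerSeries ℚ) (PowerSeries ℚ) :=
  (PowerSeries.X : PowerSeries ℚ) • PowerSeries.derivative ℚ

lemma eulerOp_eq (g : PowerSeries ℚ) : eulerOp g = eulerDer g := by
  have : eulerDer g = PowerSeries.X * (PowerSeries.derivative ℚ g) := rfl
  rw [this]
  ext d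
  cases d with
  | zero =>
      simp [eulerOp, PowerSeries.coeff_zero_eq_constantCoeff, map_mul]
  | succ n =>
      rw [eulerOp, PowerSeries.coeff_mk, PowerSeries.coeff_succ_X_mul,
        PowerSeries.coeff_derivative]
      push_cast; ring

lemma fSer_eq (r : ℕ) :
    fSer r = PowerSeries.X + (-1 : PowerSeries ℚ) ^ (r + 1) * (PowerSeries.X * fSer r) := by
  have hC : ((-1 : PowerSeries ℚ)) ^ (r + 1) = PowerSeries.C ((-1 : ℚ) ^ (r + 1)) := by
    rw [map_pow, map_neg, map_one]
  rw [hC]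
  ext d
  cases d with
  | zero => simp [fSer, PowerSeries.coeff_zero_eq_constantCoeff, map_mul, map_add]
  | succ n =>
      rw [map_add, PowerSeries.coeff_C_mul, PowerSeries.coeff_succ_X_mul]
      cases n with
      | zero => simp [fSer, PowerSeries.coeff_X]
      | succ k =>
          rw [fSer, PowerSeries.coeff_mk, PowerSeries.coeff_mk, PowerSeries.coeff_X]
          simp only [Nat.succ_ne_zero, if_false, Nat.add_sub_cancel]
          rw [if_neg (by omega), zero_add, ← pow_add]
          congr 1
          ring

lemma eulerDer_fSer (r : ℕ) :
    eulerDer (fSer r) =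
      fSer r + (-1 : PowerSeries ℚ) ^ (r + 1) * (fSer r) ^ 2 := by
  set E : PowerSeries ℚ := (-1 : PowerSeries ℚ) ^ (r + 1) with hE
  set F := fSer r with hFdef
  have hf : F = PowerSeries.X + E * (PowerSeries.X * F) := fSer_eq r
  have hδ : eulerDer F = PowerSeries.X + E * (PowerSeries.X * eulerDer F + F * PowerSeries.X) := by
    conv_lhs => rw [hf]
    rw [map_add, Derivation.leibniz, Derivation.leibniz]
    have hdX : eulerDer (PowerSeries.X : PowerSeries ℚ) = PowerSeries.X := by
      have : eulerDer (PowerSeries.X : PowerSeries ℚ)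
          = PowerSeries.X * (PowerSeries.derivative ℚ PowerSeries.X) := rfl
      rw [this, PowerSeries.derivative_X, mul_one]
    have hdE : eulerDer E = 0 := by
      have h1 : eulerDer (1 : PowerSeries ℚ) = 0 := Derivation.map_one_eq_zero _
      have hneg : eulerDer (-1 : PowerSeries ℚ) = 0 := by
        rw [map_neg, h1, neg_zero]
      rw [hE]
      induction (r + 1) with
      | zero => simpa using h1
      | succ n ih =>
          rw [pow_succ, Derivation.leibniz, ih, hneg, smul_zero, smul_zero, add_zero]
    rw [hdX, hdE]
    simp only [smul_eq_mul, smul_zero, add_zero, zero_add, mul_zero, zero_mul]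
  have hne : (1 - E * PowerSeries.X : PowerSeries ℚ) ≠ 0 := by
    intro h
    have := congrArg (PowerSeries.constantCoeff) h
    simp only [map_sub, map_one, map_mul, map_zero, PowerSeries.constantCoeff_X,
      mul_zero, sub_zero] at this
    exact one_ne_zero this
  apply mul_left_cancel₀ hne
  linear_combination hδ + (-1 - E * F) * hf

theorem stmt_4 (r m : ℕ) :
    ∃ P : Polynomial ℤ,
      P.natDegree = m + 1 ∧
      P.coeff 0 = 0 ∧
      P.coeff 1 = 1 ∧
      P.leadingCoeff = (-1) ^ (m * (r + 1)) * (m.factorial : ℤ) ∧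
      eulerOp^[m] (fSer r) = Polynomial.aeval (fSer r) P := by
  induction m with
  | zero =>
      refine ⟨Polynomial.X, ?_, ?_, ?_, ?_, ?_⟩ <;> simp
  | succ m ih =>
      obtain ⟨P, hdeg, h0, h1, hlead, heval⟩ := ih
      set e : ℤ := (-1) ^ (r + 1) with he_def
      have he : e ≠ 0 := by
        rw [he_def]; exact pow_ne_zero _ (by norm_num)
      have hleadne : P.leadingCoeff ≠ 0 := by
        rw [hlead]
        exact mul_ne_zero (pow_ne_zero _ (by norm_num)) (by exact_mod_cast Nat.factorial_ne_zero m)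
      -- derivative facts
      have hPd_coeff : (Polynomial.derivative P).coeff m = (m + 1 : ℤ) * P.leadingCoeff := by
        rw [Polynomial.coeff_derivative, Polynomial.leadingCoeff, hdeg]
        push_cast; ring
      have hPd_ne : (Polynomial.derivative P).coeff m ≠ 0 := by
        rw [hPd_coeff]
        exact mul_ne_zero (by exact_mod_cast Nat.succ_ne_zero m) hleadne
      have hPd_deg : (Polynomial.derivative P).natDegree = m := by
        refine le_antisymm ?_ (Polynomial.le_natDegree_of_ne_zero hPd_ne)
        have := Polynomial.natDegree_derivative_le P
        omega
      have hPd_lead : (Polynomial.derivative P).leadingCoeff = (m + 1 : ℤ) * P.leadingCoeff := by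
        rw [Polynomial.leadingCoeff, hPd_deg, hPd_coeff]
      have hPdne : Polynomial.derivative P ≠ 0 := fun h => hPd_ne (by simp [h])
      -- the linear factor
      have hlin : (1 + Polynomial.C e * Polynomial.X : Polynomial ℤ)
          = Polynomial.C e * Polynomial.X + Polynomial.C 1 := by
        rw [map_one]; ring
      have hlin_deg : (1 + Polynomial.C e * Polynomial.X : Polynomial ℤ).natDegree = 1 := by
        rw [hlin]; exact Polynomial.natDegree_linear he
      have hlin_lead : (1 + Polynomial.C e * Polynomial.X : Polynomial ℤ).leadingCoeff = e := by
        rw [hlin]; exact Polynomial.leadingCoeff_linear he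
      have hlin_ne : (1 + Polynomial.C e * Polynomial.X : Polynomial ℤ) ≠ 0 := fun h => by
        rw [h] at hlin_lead; exact he (by simpa using hlin_lead.symm)
      refine ⟨Polynomial.X * ((1 + Polynomial.C e * Polynomial.X) * Polynomial.derivative P),
        ?_, ?_, ?_, ?_, ?_⟩
      · rw [Polynomial.natDegree_mul Polynomial.X_ne_zero (mul_ne_zero hlin_ne hPdne),
          Polynomial.natDegree_mul hlin_ne hPdne, Polynomial.natDegree_X, hlin_deg, hPd_deg]
        omega
      · simp [Polynomial.mul_coeff_zero]
      · rw [show (1 : ℕ) = 0 + 1 from rfl, Polynomial.coeff_X_mul,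
          Polynomial.mul_coeff_zero, Polynomial.coeff_derivative, h1]
        simp
      · rw [Polynomial.leadingCoeff_mul, Polynomial.leadingCoeff_mul, Polynomial.leadingCoeff_X,
          hlin_lead, hPd_lead, hlead, one_mul, he_def, Nat.factorial_succ]
        push_cast
        rw [show (m + 1) * (r + 1) = (r + 1) + m * (r + 1) from by ring, pow_add]
        ring
      · rw [Function.iterate_succ_apply', heval, eulerOp_eq,
          ← Derivation.restrictScalars_apply (R := ℤ) eulerDer, Derivation.map_aeval,
          Derivation.restrictScalars_apply, eulerDer_fSer]
        rw [map_mul, map_mul, map_add, map_one, map_mul, Polynomial.aeval_X, Polynomial.aeval_C,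
          smul_eq_mul]
        have hmap : algebraMap ℤ (PowerSeries ℚ) e = (-1 : PowerSeries ℚ) ^ (r + 1) := by
          rw [he_def]; push_cast; ring
        rw [hmap]
        ring
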